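/- There is a constant d (depending only on the universal machine) such that for all binary strings x and y: I(y : x) ≤ I(x : y) + 2·C⁽²⁾(y | n_y) + (C(x | n_x) + C(y | x, n_y) − C(xy | n_x, n_y)) + d, where xy denotes the concatenation of x and y. (Symmetry of information follows from any chain-rule lower bound with a small deficiency term.) -/

import Mathlib

namespace SymInfo

/-- A conditional machine: the input encodes the pair (program, conditional information). -/
abbrev Machine : Type := ℕ →. ℕ

/-- Machine `M` produces string `x` from some program, given condition `cond`. -/
def Produces (M : Machine) (x cond : List Bool) : Prop :=
  ∃ p : List Bool, Encodable.encode x ∈ M (Nat.pair (Encodable.encode p) (Encodable.encode cond))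

/-- Conditional plain Kolmogorov complexity of `x` given `cond` w.r.t. `M`:
the length of a shortest program producing `x` from `cond`. -/
noncomputable def C (M : Machine) (x cond : List Bool) : ℕ :=
  sInf {n | ∃ p : List Bool, p.length = n ∧
    Encodable.encode x ∈ M (Nat.pair (Encodable.encode p) (Encodable.encode cond))}

/-- Binary representation of a natural number. -/
def bin (n : ℕ) : List Bool := n.bits

/-- Standard pairing of two strings, used for conditioning on several objects. -/
def pair2 (a b : List Bool) : List Bool :=
  bin (Nat.pair (Encodable.encode a) (Encodable.encode b))

/-- `U` is a universal machine for plain conditional complexity: it is partial computable,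
produces every string under every condition, and simulates every partial computable
machine up to an additive constant. -/
def IsUniversal (U : Machine) : Prop :=
  Nat.Partrec U ∧ (∀ x cond : List Bool, Produces U x cond) ∧
    ∀ M : Machine, Nat.Partrec M → ∃ c : ℕ, ∀ x cond : List Bool,
      Produces M x cond → C U x cond ≤ C M x cond + c

/-- `C(x | n_x)`: complexity of `x` given (the binary representation of) its length. -/
noncomputable def CL (U : Machine) (x : List Bool) : ℕ := C U x (bin x.length)

/-- `C⁽²⁾(x | n_x) = C(C(x | n_x) | n_x)`. -/
noncomputable def C2 (U : Machine) (x : List Bool) : ℕ := C U (bin (CL U x)) (bin x.length)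

/-- `I(x : y) = C(y | n_y) − C(y | x, n_y)`: the information in `x` about `y`. -/
noncomputable def I (U : Machine) (x y : List Bool) : ℤ :=
  (C U y (bin y.length) : ℤ) - (C U y (pair2 x (bin y.length)) : ℤ)

/-- Base-2 logarithm with the convention `log 0 = 0` (and `log 1 = 0`). -/
def log2 (n : ℕ) : ℕ := Nat.log 2 n

/-! ### Auxiliary material -/

open Encodable

/-- Inverse of `Nat.bits`. -/
def ofBits (l : List Bool) : ℕ := l.foldr Nat.bit 0

@[simp] lemma ofBits_nil : ofBits [] = 0 := rfl
@[simp] lemma ofBits_cons (b : Bool) (l : List Bool) :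
    ofBits (b :: l) = Nat.bit b (ofBits l) := rfl

@[simp] lemma ofBits_bits (n : ℕ) : ofBits n.bits = n := by
  induction n using Nat.binaryRec' with
  | zero => simp
  | bit b n h ih => rw [Nat.bits_append_bit _ _ h, ofBits_cons, ih]

lemma bits_eq_cons {n : ℕ} (h : n ≠ 0) : n.bits = n.bodd :: n.div2.bits := by
  conv_lhs => rw [← Nat.bit_bodd_div2 n]
  refine Nat.bits_append_bit _ _ fun hd => ?_
  by_contra hb'
  have hb : n.bodd = false := by simpa using hb'
  have hdec := Nat.bit_bodd_div2 n
  rw [hb, hd] at hdec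
  simp [Nat.bit] at hdec
  exact h hdec.symm

lemma primrec_ofBits : Primrec ofBits := by
  have h : Primrec₂ fun (_ : List Bool) (p : ℕ × Bool) => Nat.bit p.2 p.1 := by
    have : Primrec₂ fun (_ : List Bool) (p : ℕ × Bool) =>
        cond p.2 (2 * p.1 + 1) (2 * p.1) :=
      Primrec.cond (Primrec.snd.comp Primrec.snd)
        (Primrec.succ.comp <|
          (Primrec.nat_mul.comp (Primrec.const 2) (Primrec.fst.comp Primrec.snd)))
        (Primrec.nat_mul.comp (Primrec.const 2) (Primrec.fst.comp Primrec.snd))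
    exact this.of_eq fun _ p => by cases p.2 <;> simp [Nat.bit]
  have := Primrec.list_foldr (Primrec.id (α := List Bool)) (Primrec.const 0)
    (h.comp Primrec.fst ((Primrec.pair Primrec.snd Primrec.fst).comp Primrec.snd)).to₂
  exact this.of_eq fun l => by simp [ofBits]

lemma primrec_bits : Primrec Nat.bits := by
  have hg : Primrec₂ fun (_ : Unit) (l : List (List Bool)) =>
      (some (if l.length = 0 then ([] : List Bool)
        else l.length.bodd :: l.getD l.length.div2 []) : Option (List Bool)) := by
    have hif : Primrec (fun p : Unit × List (List Bool) =>
        (if p.2.length = 0 then ([] : List Bool)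
          else p.2.length.bodd :: p.2.getD p.2.length.div2 [])) := by
      refine Primrec.ite ?_ (Primrec.const []) ?_
      · exact Primrec.eq.comp (Primrec.list_length.comp Primrec.snd) (Primrec.const 0)
      · exact Primrec.list_cons.comp
          (Primrec.nat_bodd.comp (Primrec.list_length.comp Primrec.snd))
          ((Primrec.list_getD []).comp Primrec.snd
            (Primrec.nat_div2.comp (Primrec.list_length.comp Primrec.snd)))
    exact (Primrec.option_some.comp hif).to₂
  have H : ∀ (_ : Unit) (n : ℕ),
      (some (if (List.map (fun n : ℕ => n.bits) (List.range n)).length = 0 then ([] : List Bool)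
        else (List.map (fun n : ℕ => n.bits) (List.range n)).length.bodd ::
          (List.map (fun n : ℕ => n.bits) (List.range n)).getD
            (List.map (fun n : ℕ => n.bits) (List.range n)).length.div2 [])) =
      some n.bits := by
    intro _ n
    rcases Nat.eq_zero_or_pos n with h | h
    · simp [h]
    · have hlen : (List.map (fun n : ℕ => n.bits) (List.range n)).length = n := by simp
      have hlt : n.div2 < n := Nat.binaryRec_decreasing (Nat.pos_iff_ne_zero.mp h)
      rw [hlen, if_neg (Nat.pos_iff_ne_zero.mp h)]
      congr 1
      rw [List.getD_eq_getElem?_getD, List.getElem?_map, List.getElem?_range hlt]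
      simpa using (bits_eq_cons (Nat.pos_iff_ne_zero.mp h)).symm
  have := Primrec.nat_strong_rec (fun (_ : Unit) n => n.bits) hg H
  exact (this.comp (Primrec.const ()) Primrec.id).of_eq fun n => rfl

lemma primrec_drop : Primrec₂ (fun (l : List Bool) (n : ℕ) => l.drop n) := by
  have := Primrec.nat_rec' (Primrec.snd (α := List Bool) (β := ℕ)) Primrec.fst
    ((Primrec.list_tail.comp (Primrec.snd.comp Primrec.snd)).to₂)
  refine this.to₂.of_eq fun l n => ?_
  induction n with
  | zero => simp
  | succ n ih => rw [← List.tail_drop (l := l) (i := n)]; exact congrArg List.tail ih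

lemma take_eq (l : List Bool) (n : ℕ) :
    (l.reverse.drop (l.length - n)).reverse = l.take n := by
  rcases le_or_gt n l.length with h | h
  · rw [← List.reverse_take, List.reverse_reverse]
  · rw [Nat.sub_eq_zero_of_le h.le, List.drop_zero, List.reverse_reverse,
      List.take_of_length_le h.le]

lemma primrec_take : Primrec₂ (fun (l : List Bool) (n : ℕ) => l.take n) := by
  have : Primrec (fun p : List Bool × ℕ =>
      ((p.1.reverse.drop (p.1.length - p.2)).reverse)) :=
    Primrec.list_reverse.comp <| primrec_drop.comp
      (Primrec.list_reverse.comp Primrec.fst)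
      (Primrec.nat_sub.comp (Primrec.list_length.comp Primrec.fst) Primrec.snd)
  exact this.to₂.of_eq fun l n => take_eq l n

/-! ### The leading-ones counter -/

def leadStep (s : ℕ × Bool) (b : Bool) : ℕ × Bool :=
  cond s.2 (cond b (s.1 + 1, true) (s.1, false)) (s.1, false)

def lead (l : List Bool) : ℕ := (l.foldl leadStep (0, true)).1

lemma foldl_leadStep_false (l : List Bool) (c : ℕ) :
    l.foldl leadStep (c, false) = (c, false) := by
  induction l with
  | nil => rfl
  | cons b t ih => simpa [leadStep] using ih

lemma foldl_leadStep (m : ℕ) (t : List Bool) (c : ℕ) :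
    (List.replicate m true ++ false :: t).foldl leadStep (c, true) = (c + m, false) := by
  induction m generalizing c with
  | zero => simpa [leadStep] using foldl_leadStep_false t c
  | succ m ih =>
      rw [List.replicate_succ]
      simpa [leadStep, Nat.add_comm, Nat.add_assoc, Nat.add_left_comm] using ih (c + 1)

lemma lead_spec (m : ℕ) (t : List Bool) :
    lead (List.replicate m true ++ false :: t) = m := by
  unfold lead
  rw [foldl_leadStep]
  exact Nat.zero_add m

lemma primrec_lead : Primrec lead := by
  have hstep : Primrec₂ fun (_ : List Bool) (p : (ℕ × Bool) × Bool) => leadStep p.1 p.2 := by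
    have h1 : Primrec fun a : List Bool × ((ℕ × Bool) × Bool) =>
        ((a.2.1.1 + 1, true) : ℕ × Bool) :=
      Primrec.pair
        (Primrec.succ.comp (Primrec.fst.comp (Primrec.fst.comp Primrec.snd)))
        (Primrec.const true)
    have h2 : Primrec fun a : List Bool × ((ℕ × Bool) × Bool) =>
        ((a.2.1.1, false) : ℕ × Bool) :=
      Primrec.pair (Primrec.fst.comp (Primrec.fst.comp Primrec.snd))
        (Primrec.const false)
    have hc : Primrec fun a : List Bool × ((ℕ × Bool) × Bool) =>
        cond a.2.1.2 (cond a.2.2 ((a.2.1.1 + 1, true) : ℕ × Bool) (a.2.1.1, false))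
          (a.2.1.1, false) :=
      Primrec.cond (Primrec.snd.comp (Primrec.fst.comp Primrec.snd))
        (Primrec.cond (Primrec.snd.comp Primrec.snd) h1 h2) h2
    exact hc.to₂.of_eq fun _ p => rfl
  have := Primrec.list_foldl (Primrec.id (α := List Bool))
    (Primrec.const ((0 : ℕ), true)) hstep
  exact (Primrec.fst.comp this).of_eq fun l => rfl

/-! ### The simulating machine -/

/-- The machine that, on program `1^m 0 s q r` and condition `(e₁, e₂)`, runs `s`
on condition `e₂` to obtain (the bits of) a length `k`, runs `q` (of length `k`)
on condition `e₂` to obtain `y`, runs `r` on condition `(y, e₁)` to obtain `x`,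
and outputs `x ++ y`. -/
def gM (U : Machine) (p cnd : List Bool) : Part ℕ :=
  (U (Nat.pair (encode ((p.drop (lead p + 1)).take (lead p)))
      ((ofBits cnd).unpair.2))).bind fun ek =>
  ((decode (α := List Bool) ek : Option (List Bool)) : Part (List Bool)).bind fun kl =>
  (U (Nat.pair (encode (((p.drop (lead p + 1)).drop (lead p)).take (ofBits kl)))
      ((ofBits cnd).unpair.2))).bind fun ey =>
  ((decode (α := List Bool) ey : Option (List Bool)) : Part (List Bool)).bind fun y =>
  (U (Nat.pair (encode (((p.drop (lead p + 1)).drop (lead p)).drop (ofBits kl)))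
      (encode ((Nat.pair (encode y) ((ofBits cnd).unpair.1)).bits)))).bind fun ex =>
  ((decode (α := List Bool) ex : Option (List Bool)) : Part (List Bool)).map fun x =>
  encode (x ++ y)

def MM (U : Machine) : Machine := fun n =>
  ((decode (α := List Bool × List Bool) n : Option (List Bool × List Bool)) :
    Part (List Bool × List Bool)).bind fun pc => gM U pc.1 pc.2

lemma partrec_gM {U : Machine} (hU : Nat.Partrec U) :
    Partrec fun a : List Bool × List Bool => gM U a.1 a.2 := by
  have hPU : Partrec U := Partrec.nat_iff.mpr hU
  -- the `rest` of the program after the self-delimiting prefix, given `p`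
  have hrest : Primrec fun p : List Bool => (p.drop (lead p + 1)) :=
    primrec_drop.comp Primrec.id (Primrec.succ.comp primrec_lead)
  have hF1 : Primrec fun a : List Bool × List Bool =>
      Nat.pair (encode ((a.1.drop (lead a.1 + 1)).take (lead a.1)))
        ((ofBits a.2).unpair.2) :=
    Primrec₂.natPair.comp
      (Primrec.encode.comp <| primrec_take.comp (hrest.comp Primrec.fst)
        (primrec_lead.comp Primrec.fst))
      (Primrec.snd.comp <| Primrec.unpair.comp <| primrec_ofBits.comp Primrec.snd)
  have hF2 : Primrec fun q : ((List Bool × List Bool) × ℕ) × List Bool =>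
      Nat.pair (encode (((q.1.1.1.drop (lead q.1.1.1 + 1)).drop (lead q.1.1.1)).take
        (ofBits q.2))) ((ofBits q.1.1.2).unpair.2) := by
    have ha : Primrec fun q : ((List Bool × List Bool) × ℕ) × List Bool => q.1.1.1 :=
      Primrec.fst.comp (Primrec.fst.comp Primrec.fst)
    exact Primrec₂.natPair.comp
      (Primrec.encode.comp <| primrec_take.comp
        (primrec_drop.comp (hrest.comp ha) (primrec_lead.comp ha))
        (primrec_ofBits.comp Primrec.snd))
      (Primrec.snd.comp <| Primrec.unpair.comp <| primrec_ofBits.comp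
        (Primrec.snd.comp (Primrec.fst.comp Primrec.fst)))
  have hF3 : Primrec fun q : ((((List Bool × List Bool) × ℕ) × List Bool) × ℕ) × List Bool =>
      Nat.pair (encode (((q.1.1.1.1.1.drop (lead q.1.1.1.1.1 + 1)).drop
          (lead q.1.1.1.1.1)).drop (ofBits q.1.1.2)))
        (encode ((Nat.pair (encode q.2) ((ofBits q.1.1.1.1.2).unpair.1)).bits)) := by
    have ha : Primrec fun q :
        ((((List Bool × List Bool) × ℕ) × List Bool) × ℕ) × List Bool => q.1.1.1.1.1 :=
      Primrec.fst.comp (Primrec.fst.comp (Primrec.fst.comp (Primrec.fst.comp Primrec.fst)))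
    have hkl : Primrec fun q :
        ((((List Bool × List Bool) × ℕ) × List Bool) × ℕ) × List Bool => q.1.1.2 :=
      Primrec.snd.comp (Primrec.fst.comp Primrec.fst)
    have hcnd : Primrec fun q :
        ((((List Bool × List Bool) × ℕ) × List Bool) × ℕ) × List Bool => q.1.1.1.1.2 :=
      Primrec.snd.comp (Primrec.fst.comp (Primrec.fst.comp (Primrec.fst.comp Primrec.fst)))
    exact Primrec₂.natPair.comp
      (Primrec.encode.comp <| primrec_drop.comp
        (primrec_drop.comp (hrest.comp ha) (primrec_lead.comp ha))
        (primrec_ofBits.comp hkl))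
      (Primrec.encode.comp <| primrec_bits.comp <| Primrec₂.natPair.comp
        (Primrec.encode.comp Primrec.snd)
        (Primrec.fst.comp <| Primrec.unpair.comp <| primrec_ofBits.comp hcnd))
  refine Partrec.bind (hPU.comp hF1.to_comp) ?_
  refine Partrec.bind ((Computable.decode.comp Computable.snd).ofOption) ?_
  refine Partrec.bind (hPU.comp hF2.to_comp) ?_
  refine Partrec.bind ((Computable.decode.comp Computable.snd).ofOption) ?_
  refine Partrec.bind (hPU.comp hF3.to_comp) ?_
  refine Partrec.map ((Computable.decode.comp Computable.snd).ofOption) ?_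
  exact (Primrec.encode.comp (Primrec.list_append.comp Primrec.snd
    (Primrec.snd.comp (Primrec.fst.comp Primrec.fst)))).to_comp.to₂

lemma partrec_MM {U : Machine} (hU : Nat.Partrec U) : Nat.Partrec (MM U) := by
  refine Partrec.nat_iff.mp ?_
  exact Partrec.bind (Computable.decode.ofOption)
    ((partrec_gM hU).comp Computable.snd).to₂
lemma gM_eval (U : Machine) (x y kl s q r : List Bool) (e1 e2 : ℕ)
    (hq_len : q.length = ofBits kl)
    (hs : encode kl ∈ U (Nat.pair (encode s) e2))
    (hq : encode y ∈ U (Nat.pair (encode q) e2))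
    (hr : encode x ∈ U (Nat.pair (encode r) (encode ((Nat.pair (encode y) e1).bits)))) :
    encode (x ++ y) ∈
      gM U (List.replicate s.length true ++ false :: (s ++ q ++ r))
        ((Nat.pair e1 e2).bits) := by
  set p := List.replicate s.length true ++ false :: (s ++ q ++ r) with hp
  have hlead : lead p = s.length := lead_spec _ _
  have hdrop : p.drop (lead p + 1) = s ++ q ++ r := by
    rw [hlead]
    have h2 : p = (List.replicate s.length true ++ [false]) ++ (s ++ q ++ r) := by
      simp [hp]
    have h3 : (List.replicate s.length true ++ [false]).length = s.length + 1 := by simp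
    rw [h2, ← h3, List.drop_left]
  have htake : (p.drop (lead p + 1)).take (lead p) = s := by
    rw [hdrop, hlead, List.append_assoc, List.take_left]
  have hdrop2 : (p.drop (lead p + 1)).drop (lead p) = q ++ r := by
    rw [hdrop, hlead, List.append_assoc, List.drop_left]
  have hofb : ofBits ((Nat.pair e1 e2).bits) = Nat.pair e1 e2 := ofBits_bits _
  unfold gM
  rw [hofb, Nat.unpair_pair, htake, hdrop2]
  refine Part.mem_bind_iff.2 ⟨encode kl, hs, ?_⟩
  refine Part.mem_bind_iff.2 ⟨kl, by simp, ?_⟩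
  rw [← hq_len, List.take_left, List.drop_left]
  refine Part.mem_bind_iff.2 ⟨encode y, hq, ?_⟩
  refine Part.mem_bind_iff.2 ⟨y, by simp, ?_⟩
  refine Part.mem_bind_iff.2 ⟨encode x, hr, ?_⟩
  exact (Part.mem_map_iff _).2 ⟨x, by simp, rfl⟩

/-- Symmetry of information follows from any chain-rule lower bound with a small
deficiency term: `I(y : x) ≤ I(x : y) + 2·C⁽²⁾(y | n_y) + w + O(1)` where
`w = C(x | n_x) + C(y | x, n_y) − C(xy | n_x, n_y)`. -/
theorem symmetry_from_chain_rule (U : Machine) (hU : IsUniversal U) :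
    ∃ d : ℕ, ∀ x y : List Bool,
      I U y x ≤ I U x y + 2 * (C2 U y : ℤ)
        + ((C U x (bin x.length) : ℤ) + (C U y (pair2 x (bin y.length)) : ℤ)
            - (C U (x ++ y) (pair2 (bin x.length) (bin y.length)) : ℤ))
        + (d : ℤ) := by
  obtain ⟨hUpr, hAll, hUniv⟩ := hU
  obtain ⟨c, hc⟩ := hUniv (MM U) (partrec_MM hUpr)
  refine ⟨c + 1, fun x y => ?_⟩
  have hmin : ∀ a cond : List Bool, ∃ p : List Bool,
      p.length = C U a cond ∧ encode a ∈ U (Nat.pair (encode p) (encode cond)) := by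
    intro a cond
    obtain ⟨p0, hp0⟩ := hAll a cond
    exact Nat.sInf_mem (s := {n | ∃ p : List Bool, p.length = n ∧
      encode a ∈ U (Nat.pair (encode p) (encode cond))}) ⟨p0.length, p0, rfl, hp0⟩
  obtain ⟨s, hslen, hs⟩ := hmin (bin (CL U y)) (bin y.length)
  obtain ⟨q, hqlen, hq⟩ := hmin y (bin y.length)
  obtain ⟨r, hrlen, hr⟩ := hmin x (pair2 y (bin x.length))
  have hq_len : q.length = ofBits (bin (CL U y)) := by
    rw [hqlen]
    exact (ofBits_bits _).symm
  have hr' : encode x ∈ U (Nat.pair (encode r)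
      (encode ((Nat.pair (encode y) (encode (bin x.length))).bits))) := hr
  have hmem := gM_eval U x y (bin (CL U y)) s q r
    (encode (bin x.length)) (encode (bin y.length)) hq_len hs hq hr'
  set p : List Bool := List.replicate s.length true ++ false :: (s ++ q ++ r) with hpdef
  have hmem' : encode (x ++ y) ∈ MM U (Nat.pair (encode p)
      (encode (pair2 (bin x.length) (bin y.length)))) := by
    rw [show Nat.pair (encode p) (encode (pair2 (bin x.length) (bin y.length)))
        = encode (p, pair2 (bin x.length) (bin y.length)) from
      (encode_prod_val _ _).symm]
    unfold MM
    rw [Encodable.encodek]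
    refine Part.mem_bind_iff.2 ⟨(p, pair2 (bin x.length) (bin y.length)), by simp, hmem⟩
  have hprod : Produces (MM U) (x ++ y) (pair2 (bin x.length) (bin y.length)) := ⟨p, hmem'⟩
  have hCM : C (MM U) (x ++ y) (pair2 (bin x.length) (bin y.length)) ≤
      2 * C2 U y + 1 + C U y (bin y.length) + C U x (pair2 y (bin x.length)) := by
    have hlen : p.length =
        2 * C2 U y + 1 + C U y (bin y.length) + C U x (pair2 y (bin x.length)) := by
      have : p.length = s.length + 1 + (s.length + (q.length + r.length)) := by
        simp [hpdef]
        omega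
      rw [this, hslen, hqlen, hrlen]
      have hC2 : C U (bin (CL U y)) (bin y.length) = C2 U y := rfl
      rw [hC2]
      omega
    exact hlen ▸ Nat.sInf_le ⟨p, rfl, hmem'⟩
  have hkey : C U (x ++ y) (pair2 (bin x.length) (bin y.length)) ≤
      2 * C2 U y + 1 + C U y (bin y.length) + C U x (pair2 y (bin x.length)) + c :=
    le_trans (hc _ _ hprod) (by omega)
  unfold I
  have h1 := hkey
  push_cast
  omega
end SymInfo
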